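/- For every Machine Covering instance, every arrival order, every greedy schedule, and every i ∈ {1,…,m}, the minimum load of the greedy schedule is at least L_i/m − P_i. -/

import Mathlib

open Finset

noncomputable section

/-- Load of machine `M` under schedule `f` (job `i` has size `p i`). -/
def mcLoad {n m : ℕ} (p : Fin n → ℝ) (f : Fin n → Fin m) (M : Fin m) : ℝ :=
  ∑ i ∈ Finset.univ.filter (fun i => f i = M), p i

/-- Minimum load of a schedule. -/
def minLoad {n m : ℕ} (p : Fin n → ℝ) (f : Fin n → Fin m) : ℝ :=
  ⨅ M : Fin m, mcLoad p f M

/-- Load on machine `M` coming from arrival positions `< t`, where `σ` is the arrival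
order (the job arriving at position `j` is `σ j`) and `g j` is the machine receiving the
job arriving at position `j`. -/
def prefLoad {n m : ℕ} (p : Fin n → ℝ) (σ : Equiv.Perm (Fin n))
    (g : Fin n → Fin m) (t : Fin n) (M : Fin m) : ℝ :=
  ∑ j ∈ Finset.univ.filter (fun j => j < t ∧ g j = M), p (σ j)

/-- `g` is a greedy schedule for the arrival order `σ`: every arriving job is placed on a
machine whose current load is minimal. -/
def IsGreedy {n m : ℕ} (p : Fin n → ℝ) (σ : Equiv.Perm (Fin n)) (g : Fin n → Fin m) : Prop :=
  ∀ t : Fin n, ∀ M : Fin m, prefLoad p σ g t (g t) ≤ prefLoad p σ g t M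

/-- The `i`-th largest job size (1-indexed), with `nthLargest p i = 0` for `i > n`. -/
def nthLargest {n : ℕ} (p : Fin n → ℝ) (i : ℕ) : ℝ :=
  ((List.ofFn p).mergeSort (fun a b => decide (b ≤ a))).getD (i - 1) 0

end


section Aux
open Classical

lemma sum_getD' (L : List ℝ) : L.sum = ∑ k ∈ Finset.range L.length, L.getD k 0 := by
  induction L with
  | nil => simp
  | cons a L ih => simp [Finset.sum_range_succ', ih, add_comm]

noncomputable def mcvLoad {n m : ℕ} (p : Fin n → ℝ) (σ : Equiv.Perm (Fin n))
    (g : Fin n → Fin m) (M : Fin m) : ℝ :=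
  ∑ j ∈ Finset.univ.filter (fun j => g j = M), p (σ j)

lemma mcLoad_eq {n m : ℕ} (p : Fin n → ℝ) (σ : Equiv.Perm (Fin n))
    (g : Fin n → Fin m) (M : Fin m) :
    mcLoad p (fun i => g (σ.symm i)) M = mcvLoad p σ g M := by
  rw [mcLoad, mcvLoad, Finset.sum_filter, Finset.sum_filter,
    ← Equiv.sum_comp σ (fun i => if g (σ.symm i) = M then p i else 0)]
  simp

noncomputable def mcvLast {n m : ℕ} (p : Fin n → ℝ) (σ : Equiv.Perm (Fin n))
    (g : Fin n → Fin m) (M : Fin m) : ℝ :=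
  if h : (Finset.univ.filter (fun j => g j = M)).Nonempty
  then p (σ ((Finset.univ.filter (fun j => g j = M)).max' h)) else 0

end Aux

section Aux2
open Classical Finset

variable {n m : ℕ} (p : Fin n → ℝ) (σ : Equiv.Perm (Fin n)) (g : Fin n → Fin m)

lemma mcvLoad_nonneg (hp : ∀ i, 0 ≤ p i) (M : Fin m) : 0 ≤ mcvLoad p σ g M :=
  Finset.sum_nonneg fun j _ => hp _

lemma minLoad_le [NeZero m] (M : Fin m) :
    minLoad p (fun i => g (σ.symm i)) ≤ mcvLoad p σ g M := by
  rw [← mcLoad_eq]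
  exact ciInf_le (Set.Finite.bddBelow (Set.finite_range _)) M

lemma minLoad_nonneg [NeZero m] (hp : ∀ i, 0 ≤ p i) :
    0 ≤ minLoad p (fun i => g (σ.symm i)) :=
  le_ciInf fun M => Finset.sum_nonneg fun j _ => hp _

lemma load_le_min_add_last [NeZero m] (hp : ∀ i, 0 ≤ p i) (hg : IsGreedy p σ g) (M : Fin m) :
    mcvLoad p σ g M ≤ minLoad p (fun i => g (σ.symm i)) + mcvLast p σ g M := by
  set S : Finset (Fin n) := Finset.univ.filter (fun j => g j = M) with hS
  by_cases h : S.Nonempty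
  · set t := S.max' h with ht
    have htM : g t = M := by have := S.max'_mem h; simpa [hS] using this
    have hsplit : S = insert t (Finset.univ.filter (fun j => j < t ∧ g j = M)) := by
      ext j
      simp only [hS, mem_filter, mem_insert, mem_univ, true_and]
      constructor
      · intro hj
        rcases lt_or_eq_of_le (S.le_max' j (by simp [hS, hj])) with hlt | heq
        · exact Or.inr ⟨hlt, hj⟩
        · exact Or.inl heq
      · rintro (rfl | ⟨_, hj⟩)
        · exact htM
        · exact hj
    have hnotmem : t ∉ Finset.univ.filter (fun j => j < t ∧ g j = M) := by simp
    have hLoadM : mcvLoad p σ g M = p (σ t) + prefLoad p σ g t M := by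
      rw [mcvLoad, ← hS, hsplit, Finset.sum_insert hnotmem]; rfl
    have h1 : prefLoad p σ g t M ≤ minLoad p (fun i => g (σ.symm i)) := by
      apply le_ciInf
      intro M'
      rw [mcLoad_eq]
      calc prefLoad p σ g t M = prefLoad p σ g t (g t) := by rw [htM]
        _ ≤ prefLoad p σ g t M' := hg t M'
        _ ≤ mcvLoad p σ g M' := by
            apply Finset.sum_le_sum_of_subset_of_nonneg
            · intro j hj; simp only [mem_filter, mem_univ, true_and] at hj ⊢; exact hj.2
            · intro j _ _; exact hp _
    have he : mcvLast p σ g M = p (σ t) := by rw [mcvLast, dif_pos (show (Finset.univ.filter (fun j => g j = M)).Nonempty from h)]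
    rw [hLoadM, he]; linarith
  · have hS0 : S = ∅ := Finset.not_nonempty_iff_eq_empty.mp h
    have h1 : mcvLoad p σ g M = 0 := by rw [mcvLoad, ← hS, hS0]; simp
    have h2 : mcvLast p σ g M = 0 := dif_neg h
    rw [h1, h2]
    have := minLoad_nonneg p σ g hp
    linarith

end Aux2

section Aux3
variable {n : ℕ}

lemma sortedList_getD_nonneg (p : Fin n → ℝ) (hp : ∀ i, 0 ≤ p i) (k : ℕ) :
    0 ≤ ((List.ofFn p).mergeSort (fun a b => decide (b ≤ a))).getD k 0 := by
  set l := (List.ofFn p).mergeSort (fun a b => decide (b ≤ a)) with hl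
  by_cases hk : k < l.length
  · rw [List.getD_eq_getElem _ _ hk]
    have hmem : l[k] ∈ l := List.getElem_mem hk
    have hmem2 := List.mem_ofFn.mp ((List.mergeSort_perm (List.ofFn p) _).mem_iff.mp hmem)
    obtain ⟨y, hy⟩ := hmem2
    rw [← hy]; exact hp y
  · rw [List.getD_eq_default _ _ (not_lt.mp hk)]

lemma sortedList_anti (p : Fin n → ℝ) (hp : ∀ i, 0 ≤ p i) (j k : ℕ) (hjk : j ≤ k) :
    ((List.ofFn p).mergeSort (fun a b => decide (b ≤ a))).getD k 0
      ≤ ((List.ofFn p).mergeSort (fun a b => decide (b ≤ a))).getD j 0 := by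
  set l := (List.ofFn p).mergeSort (fun a b => decide (b ≤ a)) with hl
  by_cases hk : k < l.length
  · have hj : j < l.length := lt_of_le_of_lt hjk hk
    rcases eq_or_lt_of_le hjk with rfl | hlt
    · exact le_refl _
    · have hpw : l.Pairwise (fun a b => (decide (b ≤ a)) = true) :=
        List.pairwise_mergeSort (le := fun a b : ℝ => decide (b ≤ a))
          (fun a b c h1 h2 => by simp only [decide_eq_true_eq] at *; exact le_trans h2 h1)
          (fun a b => by simpa using le_total b a) (List.ofFn p)
      rw [List.pairwise_iff_get] at hpw
      have h2 := hpw ⟨j, hj⟩ ⟨k, hk⟩ hlt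
      simp only [decide_eq_true_eq, List.get_eq_getElem] at h2
      rw [List.getD_eq_getElem _ _ hk, List.getD_eq_getElem _ _ hj]
      exact h2
  · rw [List.getD_eq_default _ _ (not_lt.mp hk)]
    exact sortedList_getD_nonneg p hp j

end Aux3

section Aux4
open Finset

lemma sum_F_last_le {n m : ℕ} (p : Fin n → ℝ) (σ : Equiv.Perm (Fin n)) (g : Fin n → Fin m)
    (F : ℝ → ℝ) (hF0 : F 0 = 0) (hFnn : ∀ x, 0 ≤ F x) :
    ∑ M : Fin m, F (mcvLast p σ g M) ≤ ∑ x : Fin n, F (p x) := by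
  classical
  set A := Finset.univ.filter (fun M : Fin m => (Finset.univ.filter (fun j => g j = M)).Nonempty) with hA
  have h1 : ∑ M ∈ A, F (mcvLast p σ g M) = ∑ M : Fin m, F (mcvLast p σ g M) :=
    Finset.sum_subset (Finset.subset_univ A) (by
      intro M _ hM
      have hne : ¬ (Finset.univ.filter (fun j => g j = M)).Nonempty := by
        simpa [hA] using hM
      rw [mcvLast, dif_neg hne, hF0])
  rw [← h1]
  rcases A.eq_empty_or_nonempty with hAe | ⟨M0, hM0⟩
  · rw [hAe]
    simpa using Finset.sum_nonneg fun x (_ : x ∈ Finset.univ) => hFnn (p x)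
  · have hn0 : (Finset.univ.filter (fun j => g j = M0)).Nonempty := by simpa [hA] using hM0
    obtain ⟨j0, _⟩ := hn0
    set x : Fin m → Fin n := fun M =>
      if h : (Finset.univ.filter (fun j => g j = M)).Nonempty
      then σ ((Finset.univ.filter (fun j => g j = M)).max' h) else σ j0 with hx
    have hxval : ∀ M ∈ A, F (mcvLast p σ g M) = F (p (x M)) := by
      intro M hM
      have hne : (Finset.univ.filter (fun j => g j = M)).Nonempty := by simpa [hA] using hM
      rw [mcvLast, dif_pos hne, hx]
      simp only [dif_pos hne]
    have hinj : Set.InjOn x A := by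
      intro M hM M' hM' hxx
      have hne : (Finset.univ.filter (fun j => g j = M)).Nonempty := by simpa [hA] using hM
      have hne' : (Finset.univ.filter (fun j => g j = M')).Nonempty := by simpa [hA] using hM'
      rw [hx] at hxx
      simp only [dif_pos hne, dif_pos hne'] at hxx
      have heq := σ.injective hxx
      have e1 : g ((Finset.univ.filter (fun j => g j = M)).max' hne) = M := by
        have := Finset.max'_mem _ hne; simpa using this
      have e2 : g ((Finset.univ.filter (fun j => g j = M')).max' hne') = M' := by
        have := Finset.max'_mem _ hne'; simpa using this
      rw [← e1, ← e2, heq]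
    calc ∑ M ∈ A, F (mcvLast p σ g M) = ∑ M ∈ A, F (p (x M)) := Finset.sum_congr rfl hxval
      _ = ∑ y ∈ A.image x, F (p y) :=
          (Finset.sum_image (g := x) (f := fun y => F (p y)) (fun a ha b hb hab => hinj ha hb hab)).symm
      _ ≤ ∑ y : Fin n, F (p y) :=
          Finset.sum_le_sum_of_subset_of_nonneg (Finset.subset_univ _) (fun y _ _ => hFnn _)

lemma sum_max_le {n : ℕ} (p : Fin n → ℝ) (hp : ∀ i, 0 ≤ p i) (i : ℕ) (hi1 : 1 ≤ i) :
    ∑ x : Fin n, max (p x - nthLargest p i) 0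
      ≤ ∑ k ∈ Finset.range (i-1),
          ((List.ofFn p).mergeSort (fun a b => decide (b ≤ a))).getD k 0 := by
  classical
  set l := (List.ofFn p).mergeSort (fun a b => decide (b ≤ a)) with hldef
  set c := nthLargest p i with hc
  have hc0 : 0 ≤ c := sortedList_getD_nonneg p hp (i-1)
  have hcD : c = l.getD (i-1) 0 := rfl
  have hlen : l.length = n := by rw [hldef, List.length_mergeSort, List.length_ofFn]
  set F : ℝ → ℝ := fun a => max (a - c) 0 with hF
  have h1 : ∑ x : Fin n, F (p x) = ∑ k ∈ Finset.range n, F (l.getD k 0) := by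
    have e1 : ∑ x : Fin n, F (p x) = (List.ofFn (F ∘ p)).sum := (List.sum_ofFn).symm
    have e2 : (List.ofFn (F ∘ p)) = (List.ofFn p).map F := List.map_ofFn.symm
    have e3 : ((List.ofFn p).map F).sum = (l.map F).sum :=
      (((List.mergeSort_perm (List.ofFn p) _).map F).sum_eq).symm
    have e4 : (l.map F).sum = ∑ k ∈ Finset.range ((l.map F).length), (l.map F).getD k 0 :=
      sum_getD' _
    have e5 : (l.map F).length = n := by rw [List.length_map, hlen]
    rw [e1, e2, e3, e4, e5]
    apply Finset.sum_congr rfl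
    intro k hk
    have hk' : k < n := Finset.mem_range.mp hk
    have hkl : k < l.length := by omega
    have hkm : k < (l.map F).length := by rw [List.length_map]; omega
    rw [List.getD_eq_getElem _ _ hkm, List.getD_eq_getElem _ _ hkl, List.getElem_map]
  calc ∑ x : Fin n, max (p x - c) 0 = ∑ k ∈ Finset.range n, F (l.getD k 0) := h1
    _ ≤ ∑ k ∈ Finset.range n, (if k < i-1 then l.getD k 0 else 0) := by
        apply Finset.sum_le_sum
        intro k _
        by_cases hki : k < i-1
        · rw [if_pos hki, hF]
          exact max_le (by linarith [sortedList_getD_nonneg p hp k]) (sortedList_getD_nonneg p hp k)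
        · rw [if_neg hki, hF]
          have : l.getD k 0 ≤ c := by
            rw [hcD]; exact sortedList_anti p hp (i-1) k (by omega)
          exact max_le (by linarith) le_rfl
    _ = ∑ k ∈ (Finset.range n).filter (fun k => k < i-1), l.getD k 0 :=
        (Finset.sum_filter _ _).symm
    _ ≤ ∑ k ∈ Finset.range (i-1), l.getD k 0 := by
        apply Finset.sum_le_sum_of_subset_of_nonneg
        · intro k hk
          simp only [Finset.mem_filter, Finset.mem_range] at hk ⊢
          exact hk.2
        · intro k _ _
          exact sortedList_getD_nonneg p hp k

end Aux4

/-- For every Machine Covering instance, every arrival order, every greedy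
schedule, and every `i ∈ {1,…,m}`, the minimum load of the greedy schedule is at least
`L_i/m − P_i`, where `L_i = Σ_{j ≥ i} P_j`. -/
theorem stmt1 {n m : ℕ} (hm : 1 ≤ m) (p : Fin n → ℝ) (hp : ∀ i, 0 ≤ p i)
    (σ : Equiv.Perm (Fin n)) (g : Fin n → Fin m) (hg : IsGreedy p σ g)
    (i : ℕ) (hi1 : 1 ≤ i) (him : i ≤ m) :
    (∑ j ∈ Finset.Icc i n, nthLargest p j) / m - nthLargest p i
      ≤ minLoad p (fun i => g (σ.symm i)) := by
  classical
  haveI : NeZero m := ⟨by omega⟩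
  have hm0 : (0:ℝ) < m := by exact_mod_cast hm
  have hl0 : 0 ≤ minLoad p (fun i => g (σ.symm i)) := minLoad_nonneg p σ g hp
  have hc0 : 0 ≤ nthLargest p i := sortedList_getD_nonneg p hp (i-1)
  set ℓ := minLoad p (fun i => g (σ.symm i)) with hℓ
  set c := nthLargest p i with hc
  set l := (List.ofFn p).mergeSort (fun a b => decide (b ≤ a)) with hldef
  have hlen : l.length = n := by rw [hldef, List.length_mergeSort, List.length_ofFn]
  by_cases hin : n < i
  · have : Finset.Icc i n = ∅ := Finset.Icc_eq_empty (by omega)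
    rw [this]
    simp only [Finset.sum_empty]
    rw [zero_div]
    linarith
  -- main case : i ≤ n
  push_neg at hin
  set T := ∑ x : Fin n, p x with hT
  set S1 := ∑ k ∈ Finset.range (i-1), l.getD k 0 with hS1
  -- splitting the total into the i-1 largest and the rest
  have hq : ∀ k : ℕ, l.getD k 0 = nthLargest p (1 + k) := by
    intro k
    have hk1 : 1 + k - 1 = k := by omega
    rw [nthLargest, ← hldef, hk1]
  have h1 : S1 = ∑ j ∈ Finset.Ico 1 i, nthLargest p j := by
    rw [Finset.sum_Ico_eq_sum_range, hS1]
    exact Finset.sum_congr rfl fun k _ => hq k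
  have h4 : ∑ j ∈ Finset.Ico 1 (n+1), nthLargest p j = T := by
    rw [Finset.sum_Ico_eq_sum_range]
    have hn1 : n + 1 - 1 = n := rfl
    rw [hn1]
    have e1 : ∑ k ∈ Finset.range n, nthLargest p (1 + k) = ∑ k ∈ Finset.range n, l.getD k 0 :=
      Finset.sum_congr rfl fun k _ => (hq k).symm
    rw [e1, ← hlen, ← sum_getD' l, hldef]
    rw [(List.mergeSort_perm (List.ofFn p) _).sum_eq, List.sum_ofFn]
  have hsplit : (∑ j ∈ Finset.Icc i n, nthLargest p j) + S1 = T := by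
    rw [h1, ← h4, Finset.Ico_add_one_right_eq_Icc, add_comm]
    exact Finset.sum_Ico_consecutive _ hi1 (by omega)
  -- total bound
  have hTb : T ≤ m * ℓ + ∑ M : Fin m, mcvLast p σ g M := by
    have e1 : T = ∑ M : Fin m, mcvLoad p σ g M := by
      rw [hT, ← Equiv.sum_comp σ p]
      exact (Finset.sum_fiberwise Finset.univ g (fun j => p (σ j))).symm
    rw [e1]
    calc ∑ M : Fin m, mcvLoad p σ g M ≤ ∑ M : Fin m, (ℓ + mcvLast p σ g M) :=
          Finset.sum_le_sum fun M _ => load_le_min_add_last p σ g hp hg M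
      _ = m * ℓ + ∑ M : Fin m, mcvLast p σ g M := by
          rw [Finset.sum_add_distrib, Finset.sum_const, Finset.card_univ, Fintype.card_fin,
            nsmul_eq_mul]
  -- bound on the sum of last jobs
  have hLast : ∑ M : Fin m, mcvLast p σ g M ≤ m * c + S1 := by
    have hA : ∀ M : Fin m,
        mcvLast p σ g M = min (mcvLast p σ g M) c + max (mcvLast p σ g M - c) 0 := by
      intro M
      rcases le_total (mcvLast p σ g M) c with h | h
      · rw [min_eq_left h, max_eq_right (by linarith)]; ring
      · rw [min_eq_right h, max_eq_left (by linarith)]; ring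
    have hmin : ∑ M : Fin m, min (mcvLast p σ g M) c ≤ m * c := by
      calc ∑ M : Fin m, min (mcvLast p σ g M) c ≤ ∑ _M : Fin m, c :=
            Finset.sum_le_sum fun M _ => min_le_right _ _
        _ = m * c := by rw [Finset.sum_const, Finset.card_univ, Fintype.card_fin, nsmul_eq_mul]
    have hmax : ∑ M : Fin m, max (mcvLast p σ g M - c) 0 ≤ S1 := by
      calc ∑ M : Fin m, max (mcvLast p σ g M - c) 0 ≤ ∑ x : Fin n, max (p x - c) 0 :=
            sum_F_last_le p σ g (fun a => max (a - c) 0)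
              (by simp; linarith) (fun a => le_max_right _ _)
        _ ≤ S1 := sum_max_le p hp i hi1
    calc ∑ M : Fin m, mcvLast p σ g M
        = ∑ M : Fin m, (min (mcvLast p σ g M) c + max (mcvLast p σ g M - c) 0) :=
          Finset.sum_congr rfl fun M _ => hA M
      _ = (∑ M : Fin m, min (mcvLast p σ g M) c) + ∑ M : Fin m, max (mcvLast p σ g M - c) 0 :=
          Finset.sum_add_distrib
      _ ≤ m * c + S1 := add_le_add hmin hmax
  -- finish
  have hfin : (∑ j ∈ Finset.Icc i n, nthLargest p j) ≤ m * ℓ + m * c := by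
    have := hsplit
    nlinarith [hTb, hLast, Finset.sum_nonneg (fun k (_ : k ∈ Finset.range (i-1)) =>
      sortedList_getD_nonneg p hp k)]
  have goal2 : (∑ j ∈ Finset.Icc i n, nthLargest p j) / m ≤ ℓ + c := by
    rw [div_le_iff₀ hm0]
    have hring : (ℓ + c) * m = m * ℓ + m * c := by ring
    linarith
  linarith
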